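/- Let f(x) = Σ_{i=0}^n a_i x^i and g(x) = Σ_{i=1}^m b_i x^i be polynomials with positive coefficients a_0,…,a_n and b_1,…,b_m. If both sequences (a_i) and (b_i) are log-concave (i.e., a_i^2 ≥ a_{i-1}a_{i+1} for 1 ≤ i ≤ n-1 and b_i^2 ≥ b_{i-1}b_{i+1} for 2 ≤ i ≤ m-1), and if (a_i^2 − a_{i-1}a_{i+1})·b_1^2 ≥ a_i·a_{i-1}·b_2 for all 1 ≤ i ≤ n (with a_{n+1} := 0), then the coefficient sequence of the composition f(g(x)) is log-concave. -/

import Mathlib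

open Polynomial Finset

/-- A polynomial (with nonnegative coefficients) has a log-concave coefficient sequence. -/
def PolyLogConcave (p : Polynomial ℝ) : Prop :=
  ∀ k : ℕ, 1 ≤ k → p.coeff (k - 1) * p.coeff (k + 1) ≤ (p.coeff k) ^ 2

def GoodPoly (p : Polynomial ℝ) (lo hi : ℕ) : Prop :=
  (∀ k, k < lo → p.coeff k = 0) ∧ (∀ k, hi < k → p.coeff k = 0) ∧
  (∀ k, lo ≤ k → k ≤ hi → 0 < p.coeff k) ∧ PolyLogConcave p

lemma binet (J : Finset ℕ) (M1 M2 N1 N2 : ℕ → ℝ) :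
    (∑ j ∈ J, M1 j * N1 j) * (∑ j ∈ J, M2 j * N2 j)
      - (∑ j ∈ J, M1 j * N2 j) * (∑ j ∈ J, M2 j * N1 j)
    = ∑ p ∈ (J ×ˢ J).filter (fun p => p.1 < p.2),
        (M1 p.1 * M2 p.2 - M1 p.2 * M2 p.1) * (N1 p.1 * N2 p.2 - N1 p.2 * N2 p.1) := by
  classical
  have expand : ∀ (P Q : ℕ → ℝ), (∑ j ∈ J, P j) * (∑ j ∈ J, Q j)
      = ∑ p ∈ J ×ˢ J, P p.1 * Q p.2 := by
    intro P Q
    rw [Finset.sum_mul_sum, ← Finset.sum_product']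
  rw [expand, expand, ← Finset.sum_sub_distrib]
  set F : ℕ × ℕ → ℝ := fun p =>
    M1 p.1 * N1 p.1 * (M2 p.2 * N2 p.2) - M1 p.1 * N2 p.1 * (M2 p.2 * N1 p.2) with hF
  have h1 : ∑ p ∈ J ×ˢ J, F p
      = ∑ p ∈ (J ×ˢ J).filter (fun p => p.1 < p.2), F p
        + ∑ p ∈ (J ×ˢ J).filter (fun p => ¬ p.1 < p.2), F p :=
    (Finset.sum_filter_add_sum_filter_not (J ×ˢ J) (fun p => p.1 < p.2) F).symm
  have h1b : ∑ p ∈ (J ×ˢ J).filter (fun p => ¬ p.1 < p.2), F p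
      = ∑ p ∈ ((J ×ˢ J).filter (fun p => ¬ p.1 < p.2)).filter (fun p => p.2 < p.1), F p
        + ∑ p ∈ ((J ×ˢ J).filter (fun p => ¬ p.1 < p.2)).filter (fun p => ¬ p.2 < p.1), F p :=
    (Finset.sum_filter_add_sum_filter_not _ (fun p => p.2 < p.1) F).symm
  have hdiag : ∑ p ∈ ((J ×ˢ J).filter (fun p => ¬ p.1 < p.2)).filter (fun p => ¬ p.2 < p.1), F p
      = 0 := by
    apply Finset.sum_eq_zero
    intro p hp
    simp only [Finset.mem_filter] at hp
    have : p.1 = p.2 := le_antisymm (le_of_not_gt hp.2) (le_of_not_gt hp.1.2)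
    simp only [hF, this]; ring
  have h2 : ∑ p ∈ ((J ×ˢ J).filter (fun p => ¬ p.1 < p.2)).filter (fun p => p.2 < p.1), F p
      = ∑ p ∈ (J ×ˢ J).filter (fun p => p.1 < p.2), F p.swap := by
    apply Finset.sum_nbij' (fun p => p.swap) (fun p => p.swap)
    · intro p hp
      simp only [Finset.mem_filter, Finset.mem_product] at hp ⊢
      exact ⟨⟨hp.1.1.2, hp.1.1.1⟩, hp.2⟩
    · intro p hp
      simp only [Finset.mem_filter, Finset.mem_product] at hp ⊢
      exact ⟨⟨⟨hp.1.2, hp.1.1⟩, not_lt_of_gt hp.2⟩, hp.2⟩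
    · intro p _; simp
    · intro p _; simp
    · intro p _; rfl
  rw [h1, h1b, hdiag, h2, add_zero, ← Finset.sum_add_distrib]
  apply Finset.sum_congr rfl
  intro p _
  simp only [hF, Prod.fst_swap, Prod.snd_swap]
  ring

lemma GoodPoly.nonneg {p : Polynomial ℝ} {lo hi : ℕ} (h : GoodPoly p lo hi) :
    ∀ k, 0 ≤ p.coeff k := by
  intro k
  rcases lt_or_ge k lo with hk | hk
  · rw [h.1 k hk]
  rcases le_or_gt k hi with hk2 | hk2
  · exact (h.2.2.1 k hk hk2).le
  · rw [h.2.1 k hk2]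

lemma GoodPoly.ratio {p : Polynomial ℝ} {lo hi : ℕ} (h : GoodPoly p lo hi) :
    ∀ t s, t ≤ s → p.coeff t * p.coeff (s + 1) ≤ p.coeff (t + 1) * p.coeff s := by
  intro t s hts
  induction s, hts using Nat.le_induction with
  | base => rw [mul_comm]
  | succ s hts ih =>
    have hnn := h.nonneg
    rcases lt_or_ge s lo with hs | hs
    · have : p.coeff t = 0 := h.1 t (lt_of_le_of_lt hts hs)
      rw [this, zero_mul]
      exact mul_nonneg (hnn _) (hnn _)
    rcases le_or_gt s hi with hs2 | hs2
    · have hpos : 0 < p.coeff s := h.2.2.1 s hs hs2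
      have hlc : p.coeff s * p.coeff (s + 2) ≤ p.coeff (s + 1) ^ 2 := by
        have := h.2.2.2 (s + 1) (by omega)
        simpa using this
      have key : (p.coeff t * p.coeff (s + 2)) * p.coeff s
          ≤ (p.coeff (t + 1) * p.coeff (s + 1)) * p.coeff s := by
        calc (p.coeff t * p.coeff (s + 2)) * p.coeff s
            = p.coeff t * (p.coeff s * p.coeff (s + 2)) := by ring
          _ ≤ p.coeff t * p.coeff (s + 1) ^ 2 :=
              mul_le_mul_of_nonneg_left hlc (hnn t)
          _ = (p.coeff t * p.coeff (s + 1)) * p.coeff (s + 1) := by ring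
          _ ≤ (p.coeff (t + 1) * p.coeff s) * p.coeff (s + 1) :=
              mul_le_mul_of_nonneg_right ih (hnn _)
          _ = (p.coeff (t + 1) * p.coeff (s + 1)) * p.coeff s := by ring
      exact le_of_mul_le_mul_right key hpos
    · have : p.coeff (s + 2) = 0 := h.2.1 _ (by omega)
      rw [this, mul_zero]
      exact mul_nonneg (hnn _) (hnn _)

lemma coeff_mul_range (p q : Polynomial ℝ) (K : ℕ) :
    (p * q).coeff K = ∑ j ∈ Finset.range (K + 1), p.coeff (K - j) * q.coeff j := by
  rw [mul_comm p q, coeff_mul, Finset.Nat.sum_antidiagonal_eq_sum_range_succ_mk]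
  simp [mul_comm]

lemma goodPoly_mul {p q : Polynomial ℝ} {lop hip loq hiq : ℕ}
    (hp : GoodPoly p lop hip) (hq : GoodPoly q loq hiq)
    (h1 : lop ≤ hip) (h2 : loq ≤ hiq) :
    GoodPoly (p * q) (lop + loq) (hip + hiq) := by
  have hpn := hp.nonneg
  have hqn := hq.nonneg
  refine ⟨?_, ?_, ?_, ?_⟩
  · intro k hk
    rw [coeff_mul_range]
    apply Finset.sum_eq_zero
    intro j hj
    simp only [Finset.mem_range] at hj
    rcases lt_or_ge j loq with h | h
    · rw [hq.1 j h, mul_zero]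
    · rw [hp.1 (k - j) (by omega), zero_mul]
  · intro k hk
    rw [coeff_mul_range]
    apply Finset.sum_eq_zero
    intro j hj
    simp only [Finset.mem_range] at hj
    rcases lt_or_ge hiq j with h | h
    · rw [hq.2.1 j h, mul_zero]
    · rw [hp.2.1 (k - j) (by omega), zero_mul]
  · intro k hk hk2
    rw [coeff_mul_range]
    have hjmem : min hiq (k - lop) ∈ Finset.range (k + 1) := by
      simp only [Finset.mem_range]; omega
    apply Finset.sum_pos' (fun j _ => mul_nonneg (hpn _) (hqn _))
      ⟨min hiq (k - lop), hjmem, ?_⟩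
    apply mul_pos
    · exact hp.2.2.1 _ (by omega) (by omega)
    · exact hq.2.2.1 _ (by omega) (by omega)

  · intro k hk
    set u : ℕ → ℝ := fun j => p.coeff j with hu
    set v : ℕ → ℝ := fun j => q.coeff j with hv
    set A : ℕ → ℝ := fun j => if j ≤ k + 1 then u (k + 1 - j) else 0 with hA
    set vm : ℕ → ℝ := fun j => if 1 ≤ j then v (j - 1) else 0 with hvm
    have hAnn : ∀ j, 0 ≤ A j := by
      intro j; simp only [hA]; split
      · exact hpn _
      · exact le_refl 0
    have hvmnn : ∀ j, 0 ≤ vm j := by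
      intro j; simp only [hvm]; split
      · exact hqn _
      · exact le_refl 0
    have e1 : (p * q).coeff (k + 1) = ∑ j ∈ Finset.range (k + 1 + 1), A j * v j := by
      rw [coeff_mul_range]
      apply Finset.sum_congr rfl
      intro j hj
      simp only [Finset.mem_range] at hj
      simp only [hA, hu, hv]
      rw [if_pos (by omega : j ≤ k + 1)]
    have eS : (p * q).coeff k = ∑ j ∈ Finset.range (k + 1), A (j + 1) * v j := by
      rw [coeff_mul_range]
      apply Finset.sum_congr rfl
      intro j hj
      simp only [Finset.mem_range] at hj
      simp only [hA, hu, hv]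
      rw [if_pos (by omega : j + 1 ≤ k + 1), show k + 1 - (j + 1) = k - j from by omega]
    have hAtop : A (k + 1 + 1) = 0 := by
      simp only [hA]; rw [if_neg (by omega)]
    have hvm0 : vm 0 = 0 := by simp only [hvm]; rw [if_neg (by omega)]
    have hvms : ∀ j : ℕ, vm (j + 1) = v j := by
      intro j; simp only [hvm]; rw [if_pos (by omega)]; rfl
    have e2 : (p * q).coeff k = ∑ j ∈ Finset.range (k + 1 + 1), A (j + 1) * v j := by
      rw [Finset.sum_range_succ, hAtop, zero_mul, add_zero, eS]
    have e3 : (p * q).coeff k = ∑ j ∈ Finset.range (k + 1 + 1), A j * vm j := by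
      rw [Finset.sum_range_succ' (fun j => A j * vm j) (k + 1)]
      simp only [hvm0, mul_zero, add_zero, hvms]
      exact eS
    have e4 : (p * q).coeff (k - 1) = ∑ j ∈ Finset.range (k + 1 + 1), A (j + 1) * vm j := by
      rw [Finset.sum_range_succ' (fun j => A (j + 1) * vm j) (k + 1)]
      simp only [hvm0, mul_zero, add_zero, hvms]
      rw [Finset.sum_range_succ, hAtop, zero_mul, add_zero]
      rw [coeff_mul_range, show k - 1 + 1 = k from by omega]
      apply Finset.sum_congr rfl
      intro j hj
      simp only [Finset.mem_range] at hj
      simp only [hA, hu, hv]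
      rw [if_pos (by omega : j + 1 + 1 ≤ k + 1),
        show k + 1 - (j + 1 + 1) = k - 1 - j from by omega]
    have hb := binet (Finset.range (k + 1 + 1)) (fun j => A (j + 1)) A v vm
    rw [← e2, ← e3, ← e4, ← e1] at hb
    have hRHS : 0 ≤ ∑ p' ∈ ((Finset.range (k + 1 + 1)) ×ˢ (Finset.range (k + 1 + 1))).filter
        (fun p' => p'.1 < p'.2),
        (A (p'.1 + 1) * A p'.2 - A (p'.2 + 1) * A p'.1) * (v p'.1 * vm p'.2 - v p'.2 * vm p'.1) := by
      apply Finset.sum_nonneg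
      intro x hx
      simp only [Finset.mem_filter, Finset.mem_product, Finset.mem_range] at hx
      obtain ⟨⟨hx1, hx2⟩, hx12⟩ := hx
      apply mul_nonneg
      · rcases le_or_gt x.2 k with hc | hc
        · have hr := hp.ratio (k - x.2) (k - x.1) (by omega)
          rw [show k - x.2 + 1 = k + 1 - x.2 from by omega,
            show k - x.1 + 1 = k + 1 - x.1 from by omega] at hr
          simp only [hA]
          rw [if_pos (by omega : x.1 + 1 ≤ k + 1), if_pos (by omega : x.2 ≤ k + 1),
            if_pos (by omega : x.2 + 1 ≤ k + 1), if_pos (by omega : x.1 ≤ k + 1),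
            show k + 1 - (x.1 + 1) = k - x.1 from by omega,
            show k + 1 - (x.2 + 1) = k - x.2 from by omega]
          have hcomm : u (k + 1 - x.2) * u (k - x.1) = u (k - x.1) * u (k + 1 - x.2) :=
            mul_comm _ _
          linarith [hr]
        · have hzero : A (x.2 + 1) = 0 := by simp only [hA]; rw [if_neg (by omega)]
          rw [hzero, zero_mul, sub_zero]
          exact mul_nonneg (hAnn _) (hAnn _)
      · rcases Nat.eq_zero_or_pos x.1 with h0 | h0
        · rw [h0, hvm0, mul_zero, sub_zero]
          exact mul_nonneg (hqn _) (hvmnn _)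
        · have hr := hq.ratio (x.1 - 1) (x.2 - 1) (by omega)
          rw [show x.1 - 1 + 1 = x.1 from by omega, show x.2 - 1 + 1 = x.2 from by omega] at hr
          have hv1 : vm x.1 = v (x.1 - 1) := by simp only [hvm]; rw [if_pos (by omega)]
          have hv2 : vm x.2 = v (x.2 - 1) := by simp only [hvm]; rw [if_pos (by omega)]
          rw [hv1, hv2]
          have hcomm : v (x.1 - 1) * v x.2 = v x.2 * v (x.1 - 1) := mul_comm _ _
          linarith [hr]
    have hsq : ((p * q).coeff k) ^ 2 = (p * q).coeff k * (p * q).coeff k := pow_two _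
    linarith [hb, hRHS]

lemma goodPoly_C {c : ℝ} (hc : 0 < c) : GoodPoly (C c) 0 0 := by
  refine ⟨?_, ?_, ?_, ?_⟩
  · intro k hk
    exact absurd hk (Nat.not_lt_zero k)
  · intro k hk
    rw [coeff_C, if_neg (by omega)]
  · intro k hk hk2
    rw [show k = 0 from by omega, coeff_C, if_pos rfl]
    exact hc
  · intro k hk
    have h1 : (C c).coeff (k + 1) = 0 := by rw [coeff_C, if_neg (by omega)]
    rw [h1, mul_zero]
    positivity

lemma goodPoly_pow {g : Polynomial ℝ} {lo hi : ℕ} (hg : GoodPoly g lo hi) (h : lo ≤ hi) :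
    ∀ i, GoodPoly (g ^ i) (i * lo) (i * hi) := by
  intro i
  induction i with
  | zero =>
    simp only [pow_zero, Nat.zero_mul]
    have h1 : (1 : Polynomial ℝ) = C 1 := by simp
    rw [h1]
    exact goodPoly_C one_pos
  | succ i ih =>
    rw [pow_succ, Nat.succ_mul, Nat.succ_mul]
    exact goodPoly_mul ih hg (Nat.mul_le_mul_left i h) h

lemma coeff_sum_CXpow (c : ℕ → ℝ) (N k : ℕ) :
    (∑ i ∈ Finset.range N, C (c i) * X ^ i).coeff k = if k < N then c k else 0 := by
  rw [finset_sum_coeff]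
  simp only [coeff_C_mul, coeff_X_pow, mul_ite, mul_one, mul_zero]
  rw [Finset.sum_ite_eq (Finset.range N) k c]
  simp [Finset.mem_range]

lemma main_aux (m : ℕ) (g : Polynomial ℝ) (hm : 1 ≤ m) (hg : GoodPoly g 1 m) :
    ∀ n (a : ℕ → ℝ), (∀ i ≤ n, 0 < a i) → a (n + 1) = 0 →
    (∀ i, 1 ≤ i → i ≤ n - 1 → a (i - 1) * a (i + 1) ≤ a i ^ 2) →
    (∀ i, 1 ≤ i → i ≤ n →
      a i * a (i - 1) * g.coeff 2 ≤ (a i ^ 2 - a (i - 1) * a (i + 1)) * (g.coeff 1) ^ 2) →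
    GoodPoly ((∑ i ∈ Finset.range (n + 1), C (a i) * X ^ i).comp g) 0 (n * m) := by
  intro n
  induction n with
  | zero =>
    intro a hpos _ _ _
    simp only [zero_add, Finset.range_one, Finset.sum_singleton, pow_zero, mul_one, C_comp,
      Nat.zero_mul]
    exact goodPoly_C (hpos 0 (le_refl 0))
  | succ n IH =>
    intro a hpos htop hlc hkey
    set a' : ℕ → ℝ := fun i => a (i + 1) with ha'
    set f₁ : Polynomial ℝ := ∑ i ∈ Finset.range (n + 1), C (a' i) * X ^ i with hf₁
    have IH' : GoodPoly (f₁.comp g) 0 (n * m) := by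
      apply IH a'
      · intro i hi; exact hpos (i + 1) (by omega)
      · exact htop
      · intro i h1 h2
        have hstep := hlc (i + 1) (by omega) (by omega)
        simp only [Nat.add_sub_cancel] at hstep
        simp only [ha']
        rw [show i - 1 + 1 = i from by omega]
        exact hstep
      · intro i h1 h2
        have hstep := hkey (i + 1) (by omega) (by omega)
        simp only [Nat.add_sub_cancel] at hstep
        simp only [ha']
        rw [show i - 1 + 1 = i from by omega]
        exact hstep
    set h : Polynomial ℝ := f₁.comp g with hh
    have hdec : (∑ i ∈ Finset.range (n + 1 + 1), C (a i) * X ^ i) = C (a 0) + X * f₁ := by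
      rw [Finset.sum_range_succ' (fun i => C (a i) * X ^ i) (n + 1)]
      rw [pow_zero, mul_one, add_comm]
      congr 1
      rw [Finset.mul_sum]
      apply Finset.sum_congr rfl
      intro i _
      ring
    have hcomp : (∑ i ∈ Finset.range (n + 1 + 1), C (a i) * X ^ i).comp g
        = C (a 0) + g * h := by
      rw [hdec]
      simp [add_comp, mul_comp, X_comp, C_comp, hh]
    rw [hcomp]
    have hgh : GoodPoly (g * h) 1 (m + n * m) := by
      have := goodPoly_mul hg IH' hm (Nat.zero_le _)
      simpa using this
    have hq0 : (C (a 0) + g * h).coeff 0 = a 0 := by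
      rw [coeff_add, coeff_C, if_pos rfl, hgh.1 0 (by omega), add_zero]
    have hqk : ∀ k, 1 ≤ k → (C (a 0) + g * h).coeff k = (g * h).coeff k := by
      intro k hk
      rw [coeff_add, coeff_C, if_neg (by omega), zero_add]
    -- coefficient computations for the k = 1 log-concavity check
    have hgh1 : (g * h).coeff 1 = g.coeff 1 * h.coeff 0 := by
      rw [coeff_mul_range]
      simp [Finset.sum_range_succ, hg.1 0 (by omega)]
    have hgh2 : (g * h).coeff 2 = g.coeff 2 * h.coeff 0 + g.coeff 1 * h.coeff 1 := by
      rw [coeff_mul_range]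
      simp [Finset.sum_range_succ, hg.1 0 (by omega)]
    have hh0 : h.coeff 0 = a 1 := by
      rw [hh, coeff_zero_eq_eval_zero, eval_comp]
      have hg0 : g.eval 0 = 0 := by
        rw [← coeff_zero_eq_eval_zero]; exact hg.1 0 (by omega)
      rw [hg0, ← coeff_zero_eq_eval_zero, hf₁, coeff_sum_CXpow]
      rw [if_pos (by omega)]
    have hcomp1 : h = ∑ i ∈ Finset.range (n + 1), C (a' i) * g ^ i := by
      rw [hh, hf₁]
      simp only [Polynomial.comp, eval₂_finset_sum]
      apply Finset.sum_congr rfl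
      intro i _
      simp [eval₂_mul, eval₂_C, eval₂_X_pow]
    have hh1 : h.coeff 1 = a 2 * g.coeff 1 := by
      rw [hcomp1, finset_sum_coeff]
      simp only [coeff_C_mul]
      have h0 : ∀ i ∈ Finset.range (n + 1), i ≠ 1 → a' i * (g ^ i).coeff 1 = 0 := by
        intro i _ hi
        have hz : (g ^ i).coeff 1 = 0 := by
          rcases Nat.lt_or_ge i 2 with h2 | h2
          · have hi0 : i = 0 := by omega
            subst hi0
            simp [Polynomial.coeff_one]
          · have := (goodPoly_pow hg hm i).1 1 (by omega)
            exact this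
        rw [hz, mul_zero]
      have h1 : 1 ∉ Finset.range (n + 1) → a' 1 * (g ^ 1).coeff 1 = 0 := by
        intro hnot
        have hn0 : n = 0 := by
          simp only [Finset.mem_range] at hnot; omega
        subst hn0
        have hz : a' 1 = 0 := by simpa [ha'] using htop
        rw [hz, zero_mul]
      rw [Finset.sum_eq_single 1 h0 h1, pow_one]
    rw [show (n + 1) * m = m + n * m from by ring]
    refine ⟨fun k hk => absurd hk (Nat.not_lt_zero k), ?_, ?_, ?_⟩
    · intro k hk
      rw [hqk k (by omega)]
      apply hgh.2.1
      omega
    · intro k _ hk2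
      rcases Nat.eq_zero_or_pos k with h0 | h0
      · rw [h0, hq0]; exact hpos 0 (by omega)
      · rw [hqk k h0]
        exact hgh.2.2.1 k h0 (by omega)
    · intro k hk
      rcases Nat.lt_or_ge k 2 with h2 | h2
      · have hk1 : k = 1 := by omega
        subst hk1
        simp only [show (1 : ℕ) - 1 = 0 from rfl]
        rw [hq0, hqk 1 (by omega), hqk 2 (by omega), hgh1, hgh2, hh0, hh1]
        have hk1' := hkey 1 (by omega) (by omega)
        simp only [show (1 : ℕ) - 1 = 0 from rfl] at hk1'
        nlinarith [hk1', sq_nonneg (g.coeff 1), hpos 0 (by omega), hpos 1 (by omega)]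
      · rw [hqk (k - 1) (by omega), hqk k (by omega), hqk (k + 1) (by omega)]
        exact hgh.2.2.2 k hk

theorem stmt0 (n m : ℕ) (a b : ℕ → ℝ)
    (ha_pos : ∀ i ≤ n, 0 < a i) (ha_top : a (n + 1) = 0)
    (hb_pos : ∀ i, 1 ≤ i → i ≤ m → 0 < b i) (hb_zero : ∀ i, m < i → b i = 0)
    (hm : 1 ≤ m)
    (ha_lc : ∀ i, 1 ≤ i → i ≤ n - 1 → a (i - 1) * a (i + 1) ≤ (a i) ^ 2)
    (hb_lc : ∀ i, 2 ≤ i → i ≤ m - 1 → b (i - 1) * b (i + 1) ≤ (b i) ^ 2)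
    (hkey : ∀ i, 1 ≤ i → i ≤ n →
      a i * a (i - 1) * b 2 ≤ ((a i) ^ 2 - a (i - 1) * a (i + 1)) * (b 1) ^ 2)
    (f g : Polynomial ℝ)
    (hf : f = ∑ i ∈ Finset.range (n + 1), C (a i) * X ^ i)
    (hg : g = ∑ i ∈ Finset.Icc 1 m, C (b i) * X ^ i) :
    PolyLogConcave (f.comp g) := by
  have hgc : ∀ j, g.coeff j = if j ∈ Finset.Icc 1 m then b j else 0 := by
    intro j
    rw [hg, finset_sum_coeff]
    simp only [coeff_C_mul, coeff_X_pow, mul_ite, mul_one, mul_zero]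
    rw [Finset.sum_ite_eq (Finset.Icc 1 m) j b]
  have hc1 : g.coeff 1 = b 1 := by
    rw [hgc, if_pos (by simp [Finset.mem_Icc]; omega)]
  have hc2 : g.coeff 2 = b 2 := by
    rcases Nat.lt_or_ge m 2 with h2 | h2
    · rw [hgc, if_neg (by simp [Finset.mem_Icc]; omega), hb_zero 2 (by omega)]
    · rw [hgc, if_pos (by simp [Finset.mem_Icc]; omega)]
  have hbn : ∀ j, 0 ≤ g.coeff j := by
    intro j
    rw [hgc]
    split
    · next hmem =>
      simp only [Finset.mem_Icc] at hmem
      exact (hb_pos j hmem.1 hmem.2).le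
    · exact le_refl 0
  have hgGood : GoodPoly g 1 m := by
    refine ⟨?_, ?_, ?_, ?_⟩
    · intro k hk
      rw [hgc, if_neg (by simp [Finset.mem_Icc]; omega)]
    · intro k hk
      rw [hgc, if_neg (by simp [Finset.mem_Icc]; omega)]
    · intro k hk hk2
      rw [hgc, if_pos (by simp [Finset.mem_Icc]; omega)]
      exact hb_pos k hk hk2
    · intro k hk
      rcases Nat.lt_or_ge k 2 with h2 | h2
      · have hk1 : k = 1 := by omega
        subst hk1
        have h0 : g.coeff 0 = 0 := by
          rw [hgc, if_neg (by simp [Finset.mem_Icc])]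
        rw [show (1 : ℕ) - 1 = 0 from rfl, h0, zero_mul]
        positivity
      · rcases Nat.lt_or_ge m (k + 1) with h3 | h3
        · have h0 : g.coeff (k + 1) = 0 := by
            rw [hgc, if_neg (by simp [Finset.mem_Icc]; omega)]
          rw [h0, mul_zero]
          positivity
        · have e1 : g.coeff (k - 1) = b (k - 1) := by
            rw [hgc, if_pos (by simp [Finset.mem_Icc]; omega)]
          have e2 : g.coeff k = b k := by
            rw [hgc, if_pos (by simp [Finset.mem_Icc]; omega)]
          have e3 : g.coeff (k + 1) = b (k + 1) := by
            rw [hgc, if_pos (by simp [Finset.mem_Icc]; omega)]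
          rw [e1, e2, e3]
          exact hb_lc k h2 (by omega)
  have := main_aux m g hm hgGood n a ha_pos ha_top ha_lc (by
    intro i h1 h2
    rw [hc1, hc2]
    exact hkey i h1 h2)
  rw [hf]
  exact this.2.2.2
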